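/- Let G be a finite group, ω a normalized 3-cocycle on G with values in ℂˣ, A ⊆ Z(G) a subgroup, and let (τ, ν) and (τ', ν') be two ω-admissible pairs for A. Then there exists a map f assigning to each a ∈ A a group homomorphism f(a) : G → ℂˣ, with f(a*b) = f(a)·f(b) for all a, b ∈ A, such that τ'_a(x)/ν'(a)(x) = (τ_a(x)/ν(a)(x))·f(a)(x) for all a ∈ A and x ∈ G. -/

import Mathlib

/-- Conjugation: `g^x = x⁻¹ * g * x`. -/
def cjg {G : Type*} [Group G] (g x : G) : G := x⁻¹ * g * x

/-- A normalized 3-cocycle on `G` with values in `ℂˣ`. -/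
def IsNormalized3Cocycle {G : Type*} [Group G] (ω : G → G → G → ℂˣ) : Prop :=
  (∀ x y z w, ω y z w * ω x (y * z) w * ω x y z = ω (x * y) z w * ω x y (z * w)) ∧
  (∀ x y z, (x = 1 ∨ y = 1 ∨ z = 1) → ω x y z = 1)

/-- `θ_g(x,y) = ω(g,x,y)·ω(x,y,g^{xy}) / ω(x,g^x,y)`. -/
def theta {G : Type*} [Group G] (ω : G → G → G → ℂˣ) (g x y : G) : ℂˣ :=
  ω g x y * ω x y (cjg g (x * y)) / ω x (cjg g x) y

/-- `γ_g(x,y) = ω(x,y,g)·ω(g,x^g,y^g) / ω(x,g,y^g)`. -/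
def gam {G : Type*} [Group G] (ω : G → G → G → ℂˣ) (g x y : G) : ℂˣ :=
  ω x y g * ω g (cjg x g) (cjg y g) / ω x g (cjg y g)

/-- A 2-coboundary of `G` with values in `ℂˣ`. -/
def Is2Coboundary {G : Type*} [Group G] (β : G → G → ℂˣ) : Prop :=
  ∃ f : G → ℂˣ, f 1 = 1 ∧ ∀ x y, β x y = f x * f y / f (x * y)

/-- A (normalized) 2-cocycle of `G` with values in `ℂˣ`. -/
def Is2Cocycle {G : Type*} [Group G] (β : G → G → ℂˣ) : Prop :=
  (∀ x, β x 1 = 1 ∧ β 1 x = 1) ∧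
  (∀ x y z, β x y * β (x * y) z = β y z * β x (y * z))

/-- An ω-admissible pair `(τ, ν)` for a subgroup `A`. -/
def IsAdmissiblePair {G : Type*} [Group G] (ω : G → G → G → ℂˣ) (A : Subgroup G)
    (τ : A → G → ℂˣ) (ν : A → (G →* ℂˣ)) : Prop :=
  (∀ x, τ 1 x = 1) ∧ (∀ a, τ a 1 = 1) ∧
  (∀ (a : A) (x y : G), theta ω (a : G) x y = τ a x * τ a y / τ a (x * y)) ∧
  (ν 1 = 1) ∧
  (∀ (a b : A) (g : G),
    theta ω g (a : G) (b : G) * (τ a g * τ b g / τ (a * b) g)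
      = ν a g * ν b g / ν (a * b) g)


private lemma key_helper (a b c a' b' c' m k m' k' : ℂˣ)
    (key : a * b / c = a' * b' / c') :
    c' * (m * k) / (c * (m' * k')) = (a' * m / (a * m')) * (b' * k / (b * k')) := by
  have key' := congrArg Units.val key
  apply Units.ext
  push_cast at key' ⊢
  field_simp at key' ⊢
  linear_combination key'

private lemma key_helper2 (t a b c a' b' c' m k n m' k' n' : ℂˣ)
    (k1 : t * (a * b / c) = m * k / n)
    (k2 : t * (a' * b' / c') = m' * k' / n') :
    c' * n / (c * n') = (a' * m / (a * m')) * (b' * k / (b * k')) := by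
  have k1' := congrArg Units.val k1
  have k2' := congrArg Units.val k2
  apply Units.ext
  push_cast at k1' k2' ⊢
  field_simp at k1' k2' ⊢
  linear_combination (a' : ℂ) * b' * n' * k1' - (a : ℂ) * b * n * k2'

theorem admissible_pairs_differ_by_character {G : Type*} [Group G] [Finite G]
    (ω : G → G → G → ℂˣ) (hω : IsNormalized3Cocycle ω)
    (A : Subgroup G) (hA : A ≤ Subgroup.center G)
    (τ τ' : ↥A → G → ℂˣ) (ν ν' : ↥A → (G →* ℂˣ))
    (hpair : IsAdmissiblePair ω A τ ν) (hpair' : IsAdmissiblePair ω A τ' ν') :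
    ∃ f : ↥A → (G →* ℂˣ),
      (∀ a b : ↥A, f (a * b) = f a * f b) ∧
      ∀ (a : ↥A) (x : G),
        τ' a x / ν' a x = (τ a x / ν a x) * f a x := by

  obtain ⟨h1, h2, h3, h4, h5⟩ := hpair
  obtain ⟨h1', h2', h3', h4', h5'⟩ := hpair'
  refine ⟨fun a => {
    toFun := fun x => τ' a x * ν a x / (τ a x * ν' a x)
    map_one' := by simp [h2 a, h2' a]
    map_mul' := fun x y => by
      have key : τ a x * τ a y / τ a (x * y) = τ' a x * τ' a y / τ' a (x * y) :=
        (h3 a x y).symm.trans (h3' a x y)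
      show τ' a (x * y) * ν a (x * y) / (τ a (x * y) * ν' a (x * y)) = _
      rw [map_mul (ν a) x y, map_mul (ν' a) x y]
      exact key_helper _ _ _ _ _ _ _ _ _ _ key }, ?_, ?_⟩
  · intro a b
    ext g
    simp only [MonoidHom.coe_mk, OneHom.coe_mk, MonoidHom.mul_apply]
    exact congrArg Units.val <| key_helper2 (theta ω g (a : G) (b : G)) _ _ _ _ _ _ _ _ _ _ _ _
      (h5 a b g) (h5' a b g)
  · intro a x
    show τ' a x / ν' a x = (τ a x / ν a x) * (τ' a x * ν a x / (τ a x * ν' a x))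
    apply Units.ext
    push_cast
    field_simp
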